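/- Fix σ > 0. For each δ > 0 let θ(δ) ∈ (0, σ] and define the distortion D(δ) = Σ_{k=0}^∞ min(θ(δ)², σ² e^{−(2k+1)δ}) and the rate (in nats) R(δ) = Σ_{k=0}^∞ max(0, (1/2)·ln(σ² e^{−(2k+1)δ}/θ(δ)²)). Assume liminf_{δ→0+} δ·D(δ) > 0. Then D(δ)/((coth δ/2)·σ²) ∈ (0,1] for every δ > 0, and R(δ)/coth δ − (1/2)·[w₋₁(D(δ)/((coth δ/2)·σ²))]² → 0 as δ → 0+. -/

import Mathlib

open Real Filter Set



private lemma f_diff_ge (a b : ℝ) (ha : 0 ≤ a) (hab : a ≤ b) :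
    4*a*(b-a)*Real.exp (-(2*b)) ≤ (2*a+1)*Real.exp (-(2*a)) - (2*b+1)*Real.exp (-(2*b)) := by
  have h1 : 1 + 2*(b-a) ≤ Real.exp (2*(b-a)) := by
    have := Real.add_one_le_exp (2*(b-a)); linarith
  have h2 : Real.exp (-(2*a)) = Real.exp (2*(b-a)) * Real.exp (-(2*b)) := by
    rw [← Real.exp_add]; ring_nf
  have h3 : (0:ℝ) < Real.exp (-(2*b)) := Real.exp_pos _
  rw [h2]
  nlinarith [mul_le_mul_of_nonneg_left h1 (by linarith : (0:ℝ) ≤ 2*a+1)]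

private lemma f_anti (a b : ℝ) (ha : 0 ≤ a) (hab : a ≤ b) :
    (2*b+1)*Real.exp (-(2*b)) ≤ (2*a+1)*Real.exp (-(2*a)) := by
  have := f_diff_ge a b ha hab
  nlinarith [mul_nonneg (mul_nonneg (by linarith : (0:ℝ) ≤ 4*a) (by linarith : (0:ℝ) ≤ b - a)) (Real.exp_pos (-(2*b))).le]

private lemma inv_modulus_aux (M ε x u : ℝ) (hε : 0 < ε)
    (hx0 : 0 ≤ x) (hxu : x + ε ≤ u) (huM : u ≤ M) :
    ε^2 * Real.exp (-(2*M)) ≤ (2*x+1)*Real.exp (-(2*x)) - (2*u+1)*Real.exp (-(2*u)) := by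
  have heM : Real.exp (-(2*M)) ≤ Real.exp (-(2*u)) := Real.exp_le_exp.2 (by linarith)
  have hMpos := Real.exp_pos (-(2*M))
  rcases le_or_gt (ε/2) x with hc | hc
  · have h := f_diff_ge x u hx0 (by linarith)
    have key : ε^2 * Real.exp (-(2*M)) ≤ 4*x*(u-x)*Real.exp (-(2*u)) := by
      calc ε^2 * Real.exp (-(2*M)) ≤ 4*(ε/2)*ε*Real.exp (-(2*M)) := by nlinarith
        _ ≤ 4*x*(u-x)*Real.exp (-(2*u)) := by
            gcongr <;> nlinarith
    linarith
  · have h1 : (2*(ε/2)+1)*Real.exp (-(2*(ε/2))) ≤ (2*x+1)*Real.exp (-(2*x)) :=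
      f_anti x (ε/2) hx0 hc.le
    have h2 := f_diff_ge (ε/2) u (by linarith) (by linarith)
    have key : ε^2 * Real.exp (-(2*M)) ≤ 4*(ε/2)*(u-ε/2)*Real.exp (-(2*u)) := by
      calc ε^2 * Real.exp (-(2*M)) = 4*(ε/2)*(ε/2)*Real.exp (-(2*M)) := by ring
        _ ≤ 4*(ε/2)*(u-ε/2)*Real.exp (-(2*u)) := by
            gcongr <;> nlinarith
    linarith

private lemma inv_modulus (M ε x u : ℝ) (hε : 0 < ε)
    (hx : x ∈ Set.Icc (0:ℝ) M) (hu : u ∈ Set.Icc (0:ℝ) M)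
    (h : |(2*x+1)*Real.exp (-(2*x)) - (2*u+1)*Real.exp (-(2*u))| < ε^2 * Real.exp (-(2*M))) :
    |x - u| < ε := by
  by_contra hcon
  push_neg at hcon
  rw [abs_sub_lt_iff] at h
  rcases le_total x u with hxu | hxu
  · have hge : ε ≤ u - x := by
      rcases abs_cases (x - u) with ⟨he, _⟩ | ⟨he, _⟩ <;> linarith
    have := inv_modulus_aux M ε x u hε hx.1 (by linarith) hu.2
    linarith [h.2]
  · have hge : ε ≤ x - u := by
      rcases abs_cases (x - u) with ⟨he, _⟩ | ⟨he, _⟩ <;> linarith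
    have := inv_modulus_aux M ε u x hε hu.1 (by linarith) hx.2
    linarith [h.1]

private lemma le_M_of_f_ge (c t : ℝ) (hc : 0 < c) (hc1 : c ≤ 1) (ht : 0 ≤ t)
    (h : c ≤ (2*t+1)*Real.exp (-(2*t))) : t ≤ 3/c + 3 := by
  have hM3 : (3:ℝ) ≤ 3/c := by rw [le_div_iff₀ hc]; linarith
  by_contra hcon
  push_neg at hcon
  have hfle : (2*t+1)*Real.exp (-(2*t)) ≤ (2*(3/c+3)+1)*Real.exp (-(2*(3/c+3))) :=
    f_anti (3/c+3) t (by linarith) hcon.le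
  have hexp : 1 + (3/c+3) ≤ Real.exp (3/c+3) := by
    have := Real.add_one_le_exp (3/c+3); linarith
  have hexpprod : Real.exp (3/c+3) * Real.exp (3/c+3) * Real.exp (-(2*(3/c+3))) = 1 := by
    rw [← Real.exp_add, ← Real.exp_add, show (3/c+3) + (3/c+3) + -(2*(3/c+3)) = 0 by ring,
      Real.exp_zero]
  have hcM : c * (3/c+3) = 3 + 3*c := by field_simp
  have hsq : (1+(3/c+3))^2 ≤ Real.exp (3/c+3) * Real.exp (3/c+3) := by
    nlinarith [Real.exp_pos (3/c+3)]
  have h2 : 2*(3/c+3)+1 < c * ((1+(3/c+3))^2) := by nlinarith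
  have h3 : c * ((1+(3/c+3))^2) ≤ c * (Real.exp (3/c+3) * Real.exp (3/c+3)) := by nlinarith
  have h4 := mul_lt_mul_of_pos_right (lt_of_lt_of_le h2 h3) (Real.exp_pos (-(2*(3/c+3))))
  have h5 : c * (Real.exp (3/c+3) * Real.exp (3/c+3)) * Real.exp (-(2*(3/c+3))) = c := by
    rw [mul_assoc, hexpprod, mul_one]
  linarith

private lemma sum_odds (n : ℕ) : ∑ k ∈ Finset.range n, (2*(k:ℝ)+1) = (n:ℝ)^2 := by
  induction n with
  | zero => simp
  | succ m ih => rw [Finset.sum_range_succ, ih]; push_cast; ring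

private lemma sinh_le_mul_cosh {x : ℝ} (hx : 0 ≤ x) : Real.sinh x ≤ x * Real.cosh x := by
  have hderiv : ∀ y : ℝ, HasDerivAt (fun y => y * Real.cosh y - Real.sinh y) (y * Real.sinh y) y := by
    intro y
    have h1 := (hasDerivAt_id y).mul (Real.hasDerivAt_cosh y)
    have h2 := Real.hasDerivAt_sinh y
    refine HasDerivAt.congr_deriv (h1.sub h2) ?_
    simp only [id_eq]
    ring
  have hmono : MonotoneOn (fun y => y * Real.cosh y - Real.sinh y) (Set.Ici (0:ℝ)) := by
    apply monotoneOn_of_deriv_nonneg (convex_Ici 0)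
    · exact Continuous.continuousOn (by continuity)
    · intro y hy
      exact (hderiv y).differentiableAt.differentiableWithinAt
    · intro y hy
      rw [interior_Ici, Set.mem_Ioi] at hy
      rw [(hderiv y).deriv]
      exact mul_nonneg hy.le (Real.sinh_nonneg_iff.2 hy.le)
  have := hmono (Set.self_mem_Ici) (Set.mem_Ici.2 hx) hx
  simpa using this


private lemma geom_tail (σ δ : ℝ) (hσ : 0 < σ) (hδ : 0 < δ) (n : ℕ) :
    ∑' i : ℕ, σ^2 * Real.exp (-((2*(((i:ℝ))+(n:ℝ))+1)*δ))
      = σ^2 * Real.exp (-(2*(n:ℝ)*δ)) / (2 * Real.sinh δ) := by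
  have hgeom : ∀ i : ℕ, σ^2 * Real.exp (-((2*(((i:ℝ))+(n:ℝ))+1)*δ))
      = (σ^2 * Real.exp (-((2*(n:ℝ)+1)*δ))) * (Real.exp (-(2*δ)))^i := by
    intro i
    rw [← Real.exp_nat_mul, mul_assoc, ← Real.exp_add]
    congr 1
    ring
  have hlt : Real.exp (-(2*δ)) < 1 := Real.exp_lt_one_iff.2 (by linarith)
  have hge : (0:ℝ) ≤ Real.exp (-(2*δ)) := (Real.exp_pos _).le
  calc ∑' i : ℕ, σ^2 * Real.exp (-((2*(((i:ℝ))+(n:ℝ))+1)*δ))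
      = ∑' i : ℕ, (σ^2 * Real.exp (-((2*(n:ℝ)+1)*δ))) * (Real.exp (-(2*δ)))^i := by
        exact tsum_congr hgeom
    _ = (σ^2 * Real.exp (-((2*(n:ℝ)+1)*δ))) * (1 - Real.exp (-(2*δ)))⁻¹ := by
        rw [tsum_mul_left, tsum_geometric_of_lt_one hge hlt]
    _ = σ^2 * Real.exp (-(2*(n:ℝ)*δ)) / (2 * Real.sinh δ) := by
        have hs : 1 - Real.exp (-(2*δ)) = Real.exp (-δ) * (2 * Real.sinh δ) := by
          rw [Real.sinh_eq]
          have h1 : Real.exp (-δ) * Real.exp δ = 1 := by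
            rw [← Real.exp_add]; simp
          have h2 : Real.exp (-δ) * Real.exp (-δ) = Real.exp (-(2*δ)) := by
            rw [← Real.exp_add]; ring_nf
          nlinarith [h1, h2]
        have he : Real.exp (-((2*(n:ℝ)+1)*δ)) = Real.exp (-(2*(n:ℝ)*δ)) * Real.exp (-δ) := by
          rw [← Real.exp_add]; ring_nf
        have hsinh : 0 < Real.sinh δ := Real.sinh_pos_iff.2 hδ
        rw [hs, he]
        rw [mul_inv]
        field_simp [Real.exp_ne_zero]
  done

private lemma struct (σ t δ : ℝ) (hσ : 0 < σ) (ht0 : 0 < t) (htσ : t ≤ σ) (hδ : 0 < δ) :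
    ∃ n : ℕ,
      |Real.log (σ^2 / t^2) - 2*(n:ℝ)*δ| ≤ δ ∧
      Real.log (σ^2 / t^2) ≤ (2*(n:ℝ)+1)*δ ∧
      (∑' k : ℕ, min (t ^ 2) (σ ^ 2 * Real.exp (-((2 * (k:ℝ) + 1) * δ))))
        = (n:ℝ) * t^2 + σ^2 * Real.exp (-(2*(n:ℝ)*δ)) / (2 * Real.sinh δ) ∧
      (∑' k : ℕ, max 0 ((1/2) * Real.log (σ ^ 2 * Real.exp (-((2 * (k:ℝ) + 1) * δ)) / t ^ 2)))
        = (1/2) * ((n:ℝ) * Real.log (σ^2 / t^2) - (n:ℝ)^2 * δ) ∧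
      (∑' k : ℕ, min (t ^ 2) (σ ^ 2 * Real.exp (-((2 * (k:ℝ) + 1) * δ)))) ≤ σ^2 / (2 * Real.sinh δ) ∧
      t^2 = σ^2 * Real.exp (-(Real.log (σ^2 / t^2))) := by
  set s := Real.log (σ^2 / t^2) with hs_def
  have ht2 : (0:ℝ) < t^2 := by positivity
  have hs0 : 0 ≤ s := Real.log_nonneg ((one_le_div ht2).2 (by nlinarith))
  have hts : t^2 = σ^2 * Real.exp (-s) := by
    have h := Real.exp_log (show (0:ℝ) < σ^2/t^2 by positivity)
    rw [← hs_def] at h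
    rw [Real.exp_neg, h]
    field_simp
  have h2δ : (0:ℝ) < 2*δ := by linarith
  set n : ℕ := ⌈(s - δ)/(2*δ)⌉₊ with hn_def
  have hupper : s ≤ (2*(n:ℝ)+1)*δ := by
    have h := Nat.le_ceil ((s - δ)/(2*δ))
    rw [← hn_def] at h
    rw [div_le_iff₀ h2δ] at h
    linarith
  have hlower : 2*(n:ℝ)*δ - s ≤ δ := by
    rcases Nat.eq_zero_or_pos n with h0 | hpos
    · rw [h0]; push_cast; linarith
    · obtain ⟨m, hm⟩ := Nat.exists_eq_add_of_lt hpos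
      have hmn : m < n := by omega
      have := Nat.lt_ceil.1 (hn_def ▸ hmn)
      rw [lt_div_iff₀ h2δ] at this
      have hcast : (n:ℝ) = (m:ℝ) + 1 := by rw [hm]; push_cast; ring
      rw [hcast]; linarith
  have hiff : ∀ k : ℕ, k < n ↔ (2*(k:ℝ)+1)*δ < s := by
    intro k
    rw [hn_def, Nat.lt_ceil, lt_div_iff₀ h2δ]
    constructor <;> intro h <;> linarith
  have hmin_lt : ∀ k : ℕ, k < n →
      min (t ^ 2) (σ ^ 2 * Real.exp (-((2 * (k:ℝ) + 1) * δ))) = t^2 := by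
    intro k hk
    refine min_eq_left ?_
    rw [hts]
    have : Real.exp (-s) ≤ Real.exp (-((2 * (k:ℝ) + 1) * δ)) :=
      Real.exp_le_exp.2 (by have := (hiff k).1 hk; linarith)
    nlinarith
  have hmin_ge : ∀ k : ℕ, n ≤ k →
      min (t ^ 2) (σ ^ 2 * Real.exp (-((2 * (k:ℝ) + 1) * δ))) = σ ^ 2 * Real.exp (-((2 * (k:ℝ) + 1) * δ)) := by
    intro k hk
    refine min_eq_right ?_
    rw [hts]
    have hsk : s ≤ (2*(k:ℝ)+1)*δ := by
      by_contra hcon; push_neg at hcon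
      exact absurd ((hiff k).2 hcon) (by omega)
    have : Real.exp (-((2 * (k:ℝ) + 1) * δ)) ≤ Real.exp (-s) :=
      Real.exp_le_exp.2 (by linarith)
    nlinarith
  have hgeo : ∀ k : ℕ, σ^2 * Real.exp (-((2*(k:ℝ)+1)*δ)) = (σ^2 * Real.exp (-δ)) * (Real.exp (-(2*δ)))^k := by
    intro k
    rw [← Real.exp_nat_mul, mul_assoc, ← Real.exp_add]
    congr 1
    ring
  have hlt1 : Real.exp (-(2*δ)) < 1 := Real.exp_lt_one_iff.2 (by linarith)
  have hsum : Summable (fun k : ℕ => min (t ^ 2) (σ ^ 2 * Real.exp (-((2 * (k:ℝ) + 1) * δ)))) := by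
    refine Summable.of_nonneg_of_le (fun k => le_min ht2.le (by positivity)) (fun k => ?_)
      ((summable_geometric_of_lt_one (Real.exp_pos _).le hlt1).mul_left (σ^2 * Real.exp (-δ)))
    rw [← hgeo k]
    exact min_le_right _ _
  have hsumgeo : Summable (fun k : ℕ => σ^2 * Real.exp (-((2*(k:ℝ)+1)*δ))) :=
    ((summable_geometric_of_lt_one (Real.exp_pos _).le hlt1).mul_left (σ^2 * Real.exp (-δ))).congr
      (fun k => (hgeo k).symm)
  have hDle : (∑' k : ℕ, min (t ^ 2) (σ ^ 2 * Real.exp (-((2 * (k:ℝ) + 1) * δ)))) ≤ σ^2 / (2 * Real.sinh δ) := by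
    have h0 : ∑' k : ℕ, σ^2 * Real.exp (-((2*(k:ℝ)+1)*δ)) = σ^2 / (2 * Real.sinh δ) := by
      simpa using geom_tail σ δ hσ hδ 0
    exact le_of_le_of_eq (Summable.tsum_le_tsum (fun k => min_le_right _ _) hsum hsumgeo) h0
  refine ⟨n, ?_, hupper, ?_, ?_, hDle, hts⟩
  · rw [abs_le]; constructor <;> linarith
  · rw [← Summable.sum_add_tsum_nat_add n hsum]
    have hsum1 : ∑ k ∈ Finset.range n, min (t ^ 2) (σ ^ 2 * Real.exp (-((2 * (k:ℝ) + 1) * δ)))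
        = (n:ℝ) * t^2 := by
      rw [Finset.sum_congr rfl (fun k hk => hmin_lt k (Finset.mem_range.1 hk))]
      rw [Finset.sum_const, Finset.card_range, nsmul_eq_mul]
    have hsum2 : ∑' i : ℕ, min (t ^ 2) (σ ^ 2 * Real.exp (-((2 * ((i + n : ℕ):ℝ) + 1) * δ)))
        = σ^2 * Real.exp (-(2*(n:ℝ)*δ)) / (2 * Real.sinh δ) := by
      rw [← geom_tail σ δ hσ hδ n]
      refine tsum_congr (fun i => ?_)
      rw [hmin_ge (i + n) (Nat.le_add_left n i)]
      push_cast
      try ring_nf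
    rw [hsum1, hsum2]
  · have hterm : ∀ k : ℕ, max 0 ((1/2) * Real.log (σ ^ 2 * Real.exp (-((2 * (k:ℝ) + 1) * δ)) / t ^ 2))
        = max 0 ((1/2) * (s - (2 * (k:ℝ) + 1) * δ)) := by
      intro k
      congr 1
      rw [hts]
      rw [mul_div_mul_left _ _ (by positivity : (σ:ℝ)^2 ≠ 0), ← Real.exp_sub]
      rw [Real.log_exp]
      ring_nf
    rw [tsum_congr hterm]
    rw [tsum_eq_sum (s := Finset.range n) (fun k hk => by
      have hkn : n ≤ k := le_of_not_gt (fun h => hk (Finset.mem_range.2 h))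
      have hsk : s ≤ (2*(k:ℝ)+1)*δ := by
        by_contra hcon; push_neg at hcon
        exact absurd ((hiff k).2 hcon) (by omega)
      exact max_eq_left (by linarith))]
    have hpos : ∀ k ∈ Finset.range n, max 0 ((1/2) * (s - (2 * (k:ℝ) + 1) * δ))
        = (1/2)*s - (δ/2) * (2*(k:ℝ)+1) := by
      intro k hk
      have := (hiff k).1 (Finset.mem_range.1 hk)
      rw [max_eq_right (by linarith)]
      ring
    rw [Finset.sum_congr rfl hpos, Finset.sum_sub_distrib, Finset.sum_const, Finset.card_range,
      ← Finset.mul_sum, sum_odds]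
    simp only [nsmul_eq_mul]
    ring


private lemma exp_half_le_two : Real.exp (1/2) ≤ 2 := by
  have h12 : Real.exp (1/2) * Real.exp (1/2) = Real.exp 1 := by
    rw [← Real.exp_add]; norm_num
  have he1 : Real.exp 1 < 2.7182818286 := Real.exp_one_lt_d9
  nlinarith [Real.exp_pos (1/2)]

private lemma exp_gap (δ : ℝ) (hδ : 0 ≤ δ) :
    Real.exp δ - Real.exp (-δ) ≤ Real.exp (2*δ) - 1 ∧
    Real.exp δ - 1 ≤ Real.exp (2*δ) - 1 := by
  have ha1 : (1:ℝ) ≤ Real.exp δ := Real.one_le_exp hδ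
  have hab : Real.exp δ * Real.exp (-δ) = 1 := by rw [← Real.exp_add]; simp
  have he2 : Real.exp (2*δ) = Real.exp δ * Real.exp δ := by rw [← Real.exp_add]; ring_nf
  constructor
  · nlinarith [Real.exp_pos δ, sq_nonneg (Real.exp δ - 1)]
  · nlinarith

private lemma N_bound (T E C a b e2 u M : ℝ) (hu0 : 0 ≤ u) (huM : u ≤ M)
    (hE0 : 0 < E) (hE1 : E ≤ 1) (hC1 : 1 ≤ C) (hCa : C ≤ a) (ha1 : 1 ≤ a)
    (hab : a * b = 1) (he2 : e2 = a * a)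
    (hgap1 : a - b ≤ e2 - 1) (hgap2 : a - 1 ≤ e2 - 1)
    (hT_up : T ≤ 2*u*(E*e2)) (hT_lo : 2*u*(E*b) ≤ T) :
    |T + E - (2*u+1)*E*C| ≤ (2*M+1)*(e2-1) := by
  have he21 : (1:ℝ) ≤ e2 := by nlinarith
  rw [abs_le]
  constructor
  · have w1 : (2*u+1)*E*C ≤ (2*u+1)*E*a := by
      have h : (0:ℝ) ≤ (2*u+1)*E := by positivity
      nlinarith
    have w2 : 2*u*E*(a - b) ≤ 2*u*E*(e2 - 1) := by
      have h : (0:ℝ) ≤ 2*u*E := by positivity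
      nlinarith
    have w3 : E*(a - 1) ≤ E*(e2 - 1) := by nlinarith
    have w4 : 2*u*E*(e2 - 1) ≤ 2*u*(e2 - 1) := by nlinarith [mul_nonneg (mul_nonneg (by linarith : (0:ℝ) ≤ 2*u) (by linarith : (0:ℝ) ≤ 1-E)) (by linarith : (0:ℝ) ≤ e2-1)]
    have w5 : 2*u*(e2 - 1) ≤ 2*M*(e2 - 1) := by nlinarith [mul_le_mul_of_nonneg_right huM (by linarith : (0:ℝ) ≤ e2-1)]
    have w6 : E*(e2 - 1) ≤ e2 - 1 := by nlinarith
    nlinarith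
  · have w1 : (2*u+1)*E*C ≥ (2*u+1)*E := by nlinarith [mul_nonneg (mul_nonneg (by linarith : (0:ℝ) ≤ 2*u+1) hE0.le) (by linarith : (0:ℝ) ≤ C-1)]
    have w4 : 2*u*E*(e2 - 1) ≤ 2*u*(e2 - 1) := by nlinarith [mul_nonneg (mul_nonneg (by linarith : (0:ℝ) ≤ 2*u) (by linarith : (0:ℝ) ≤ 1-E)) (by linarith : (0:ℝ) ≤ e2-1)]
    have w5 : 2*u*(e2 - 1) ≤ 2*M*(e2 - 1) := by nlinarith [mul_le_mul_of_nonneg_right huM (by linarith : (0:ℝ) ≤ e2-1)]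
    nlinarith

private lemma R_nonneg (nr s δ : ℝ) (h1 : 1 ≤ nr) (hδ : 0 < δ)
    (hge : 2*(nr*δ) - δ ≤ s) : 0 ≤ 1/2*(nr*s - nr^2*δ) := by
  have := mul_le_mul_of_nonneg_left hge (by linarith : (0:ℝ) ≤ nr)
  nlinarith [mul_nonneg (mul_nonneg (by linarith : (0:ℝ) ≤ nr) hδ.le) (by linarith : (0:ℝ) ≤ nr - 1)]

private lemma poly_mono (u M δ : ℝ) (hu0 : 0 ≤ u) (huM : u ≤ M) (hδ : 0 ≤ δ) :
    u^2*δ^2 + u*δ^3 ≤ M^2*δ^2 + M*δ^3 := by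
  have hM0 : 0 ≤ M := hu0.trans huM
  have h1 : u^2 ≤ M^2 := by nlinarith
  have h2 : u*δ^3 ≤ M*δ^3 := by nlinarith [pow_nonneg hδ 3]
  nlinarith [sq_nonneg δ, mul_le_mul_of_nonneg_right h1 (sq_nonneg δ)]

private lemma frac_bound (δ S C : ℝ) (hδ : 0 < δ) (hS : 0 < S) (hC1 : 1 ≤ C) (hC2 : C ≤ 2)
    (hSδ : δ ≤ S) (hSC : S ≤ δ*C) (hid : C^2 - S^2 = 1) :
    δ - S/C ≤ 2*δ^3 := by
  have hC0 : (0:ℝ) < C := by linarith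
  have hCm1 : C - 1 ≤ S^2/2 := by nlinarith
  have hS2δ : S ≤ 2*δ := by nlinarith [mul_nonneg hδ.le (by linarith : (0:ℝ) ≤ 2-C)]
  have hS2 : S^2 ≤ 4*δ^2 := by nlinarith [hS.le]
  have h1 : δ - S/C = (δ*C - S)/C := by field_simp
  rw [h1]
  have hnum0 : 0 ≤ δ*C - S := by nlinarith
  have h2 : (δ*C - S)/C ≤ δ*C - S := by
    apply div_le_self hnum0 hC1
  have h3 : δ*C - S ≤ δ*(C - 1) := by nlinarith
  nlinarith

private lemma Meps_lt (M ε : ℝ) (hM0 : 0 < M) (hε : 0 < ε) : M * (ε/(3*(M+1))) < ε/3 := by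
  have heq : M * (ε/(3*(M+1))) = (M*ε)/(3*(M+1)) := by ring
  rw [heq, div_lt_div_iff₀ (by positivity) (by norm_num)]
  nlinarith


set_option maxHeartbeats 2000000

/-- Theorem 3 of the paper: closed-form rate distortion function of the nonstationary Gaussian
source with independent coefficients `X_k ~ N(0, σ² e^{−(2k+1)δ})`. With water level
`θ(δ)² ∈ (0, σ²]`, distortion `D(δ) = Σ_k min(θ(δ)², σ² e^{−(2k+1)δ})` and rate (in nats)
`R(δ) = Σ_k ((1/2)·ln(σ² e^{−(2k+1)δ}/θ(δ)²))⁺`; if `liminf_{δ→0+} δ·D(δ) > 0`, then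
`D(δ)/((coth δ/2)·σ²) ∈ (0,1]` for every `δ > 0`, and
`R(δ)/coth δ − (1/2)·[wNeg1(D(δ)/((coth δ/2)·σ²))]² → 0` as `δ → 0+`, where `wNeg1` is the
inverse of the decreasing bijection `x ↦ (2x+1)e^{−2x}` of `[0,∞)` onto `(0,1]`. -/
theorem rate_distortion_closed_form
    (σ : ℝ) (hσ : 0 < σ)
    (θ : ℝ → ℝ) (hθ : ∀ δ > 0, θ δ ∈ Set.Ioc 0 σ)
    (wNeg1 : ℝ → ℝ)
    (hw_left : ∀ x : ℝ, 0 ≤ x → wNeg1 ((2 * x + 1) * Real.exp (-(2 * x))) = x)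
    (hw_right : ∀ y ∈ Set.Ioc (0 : ℝ) 1,
      0 ≤ wNeg1 y ∧ (2 * wNeg1 y + 1) * Real.exp (-(2 * wNeg1 y)) = y)
    (D R : ℝ → ℝ)
    (hD : ∀ δ > 0, D δ =
      ∑' k : ℕ, min (θ δ ^ 2) (σ ^ 2 * Real.exp (-((2 * (k : ℝ) + 1) * δ))))
    (hR : ∀ δ > 0, R δ =
      ∑' k : ℕ, max 0 ((1 / 2) *
        Real.log (σ ^ 2 * Real.exp (-((2 * (k : ℝ) + 1) * δ)) / θ δ ^ 2)))
    (hliminf : 0 < Filter.liminf (fun δ : ℝ => δ * D δ) (nhdsWithin 0 (Set.Ioi 0))) :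
    (∀ δ > 0, D δ / ((Real.cosh δ / Real.sinh δ / 2) * σ ^ 2) ∈ Set.Ioc (0 : ℝ) 1) ∧
    Filter.Tendsto
      (fun δ : ℝ =>
        R δ / (Real.cosh δ / Real.sinh δ) -
          (1 / 2) * (wNeg1 (D δ / ((Real.cosh δ / Real.sinh δ / 2) * σ ^ 2))) ^ 2)
      (nhdsWithin 0 (Set.Ioi 0)) (nhds 0) := by
  have hσ2 : (0:ℝ) < σ^2 := by positivity
  -- Part 1
  have hpart1 : ∀ δ > 0, D δ / ((Real.cosh δ / Real.sinh δ / 2) * σ ^ 2) ∈ Set.Ioc (0 : ℝ) 1 := by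
    intro δ hδ
    obtain ⟨n, habs, hupper, hDrep, hRrep, hDle, hts⟩ :=
      struct σ (θ δ) δ hσ (hθ δ hδ).1 (hθ δ hδ).2 hδ
    have hS : 0 < Real.sinh δ := Real.sinh_pos_iff.2 hδ
    have hC : (1:ℝ) ≤ Real.cosh δ := Real.one_le_cosh δ
    have hq : 0 < (Real.cosh δ / Real.sinh δ / 2) * σ ^ 2 := by
      have : 0 < Real.cosh δ / Real.sinh δ / 2 := by positivity
      positivity
    have hDpos : 0 < D δ := by
      rw [hD δ hδ, hDrep]
      have h1 : (0:ℝ) ≤ (n:ℝ) * θ δ ^ 2 := by positivity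
      have h2 : (0:ℝ) < σ^2 * Real.exp (-(2*(n:ℝ)*δ)) / (2 * Real.sinh δ) := by positivity
      linarith
    have hDleq : D δ ≤ (Real.cosh δ / Real.sinh δ / 2) * σ ^ 2 := by
      rw [hD δ hδ]
      refine hDle.trans ?_
      rw [div_le_iff₀ (by positivity : (0:ℝ) < 2 * Real.sinh δ)]
      have : (Real.cosh δ / Real.sinh δ / 2) * σ ^ 2 * (2 * Real.sinh δ) = σ^2 * Real.cosh δ := by
        field_simp
      rw [this]
      have := mul_le_mul_of_nonneg_left hC (le_of_lt hσ2)
      linarith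
    exact ⟨div_pos hDpos hq, (div_le_one hq).2 hDleq⟩
  refine ⟨hpart1, ?_⟩
  -- Part 2
  obtain ⟨L, hL_def⟩ : ∃ L : ℝ, L = Filter.liminf (fun δ : ℝ => δ * D δ) (nhdsWithin 0 (Set.Ioi 0)) := ⟨_, rfl⟩
  have hq_pos : ∀ δ : ℝ, 0 < δ → 0 < (Real.cosh δ / Real.sinh δ / 2) * σ ^ 2 := by
    intro δ hδ
    have hS : 0 < Real.sinh δ := Real.sinh_pos_iff.2 hδ
    have hC : (0:ℝ) < Real.cosh δ := Real.cosh_pos δ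
    positivity
  have hDpos : ∀ δ : ℝ, 0 < δ → 0 < D δ := by
    intro δ hδ
    have h := (hpart1 δ hδ).1
    rcases div_pos_iff.1 h with ⟨h1, _⟩ | ⟨_, h2⟩
    · exact h1
    · exact absurd (hq_pos δ hδ) (not_lt.2 h2.le)
  have hbddbelow : Filter.IsBoundedUnder (· ≥ ·) (nhdsWithin (0:ℝ) (Set.Ioi 0))
      (fun δ : ℝ => δ * D δ) := by
    refine ⟨0, ?_⟩
    rw [Filter.eventually_map]
    filter_upwards [self_mem_nhdsWithin] with δ hδ
    have hδ0 : (0:ℝ) < δ := hδ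
    exact mul_nonneg hδ0.le (hDpos δ hδ0).le
  have hL0 : 0 < L := by rw [hL_def]; exact hliminf
  have hev_lb : ∀ᶠ δ in nhdsWithin (0:ℝ) (Set.Ioi 0), L/2 < δ * D δ :=
    Filter.eventually_lt_of_lt_liminf (by rw [← hL_def]; linarith) hbddbelow
  obtain ⟨c, hc_def⟩ : ∃ c : ℝ, c = min (L/(2*σ^2)) (1/2) := ⟨_, rfl⟩
  have hc : 0 < c := by rw [hc_def]; exact lt_min (by positivity) (by norm_num)
  have hc1 : c ≤ 1 := by rw [hc_def]; exact le_trans (min_le_right _ _) (by norm_num)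
  obtain ⟨M, hM_def⟩ : ∃ M : ℝ, M = 3/c + 3 := ⟨_, rfl⟩
  have hM0 : 0 < M := by
    have h3c : 0 < 3/c := div_pos (by norm_num) hc
    rw [hM_def]; linarith
  rw [Metric.tendsto_nhds]
  intro ε hε
  obtain ⟨ε', hε'_def⟩ : ∃ e : ℝ, e = min 1 (ε/(3*(M+1))) := ⟨_, rfl⟩
  have hε' : 0 < ε' := by
    rw [hε'_def]
    have : 0 < ε/(3*(M+1)) := div_pos hε (by nlinarith [hM0])
    exact lt_min one_pos this
  obtain ⟨η, hη_def⟩ : ∃ h : ℝ, h = ε'^2 * Real.exp (-(2*M)) := ⟨_, rfl⟩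
  have hη : 0 < η := by
    rw [hη_def]
    exact mul_pos (pow_pos hε' 2) (Real.exp_pos _)
  obtain ⟨g, hg_def⟩ : ∃ g : ℝ → ℝ, g = fun δ : ℝ => M^2*δ^2 + M*δ^3 + M*δ/2 + (2*M+1)*(Real.exp (2*δ) - 1) := ⟨_, rfl⟩
  have hgcont : Continuous g := by rw [hg_def]; fun_prop
  have hg0 : g 0 = 0 := by simp [hg_def]
  have hgtendsto : Filter.Tendsto g (nhdsWithin (0:ℝ) (Set.Ioi 0)) (nhds 0) :=
    (hgcont.tendsto' 0 0 hg0).mono_left nhdsWithin_le_nhds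
  have hgev : ∀ᶠ δ in nhdsWithin (0:ℝ) (Set.Ioi 0), g δ < min (ε/3) η := by
    have hpos : 0 < min (ε/3) η := lt_min (by positivity) hη
    exact hgtendsto.eventually_lt_const hpos
  have hIoo : Set.Ioo (0:ℝ) (1/2) ∈ nhdsWithin (0:ℝ) (Set.Ioi 0) :=
    Ioo_mem_nhdsGT_of_mem ⟨le_refl 0, by norm_num⟩
  filter_upwards [hev_lb, hgev, hIoo] with δ hδD hgδ hδmem
  obtain ⟨hδ0, hδhalf⟩ := hδmem
  have hS : 0 < Real.sinh δ := Real.sinh_pos_iff.2 hδ0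
  have hC0 : (0:ℝ) < Real.cosh δ := Real.cosh_pos δ
  have hC1 : (1:ℝ) ≤ Real.cosh δ := Real.one_le_cosh δ
  have hSδ : δ ≤ Real.sinh δ := Real.self_le_sinh_iff.2 hδ0.le
  have hSC : Real.sinh δ ≤ δ * Real.cosh δ := sinh_le_mul_cosh hδ0.le
  have hCe : Real.cosh δ ≤ Real.exp δ := by
    rw [Real.cosh_eq]
    have : Real.exp (-δ) ≤ Real.exp δ := Real.exp_le_exp.2 (by linarith)
    linarith
  have hexpδ2 : Real.exp δ ≤ 2 :=
    le_trans (Real.exp_le_exp.2 (by linarith : δ ≤ 1/2)) exp_half_le_two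
  have hC2 : Real.cosh δ ≤ 2 := hCe.trans hexpδ2
  have hexpδ1 : (1:ℝ) ≤ Real.exp δ := Real.one_le_exp hδ0.le
  have hexp2δ1 : (1:ℝ) ≤ Real.exp (2*δ) := Real.one_le_exp (by linarith)
  have hexpprod : Real.exp δ * Real.exp (-δ) = 1 := by
    rw [← Real.exp_add]; simp
  have hexp2 : Real.exp (2*δ) = Real.exp δ * Real.exp δ := by
    rw [← Real.exp_add]; ring_nf
  obtain ⟨n, habs, hupper, hDrep', hRrep', hDle', hts⟩ :=
    struct σ (θ δ) δ hσ (hθ δ hδ0).1 (hθ δ hδ0).2 hδ0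
  obtain ⟨s, hs_def⟩ : ∃ s : ℝ, s = Real.log (σ^2 / (θ δ)^2) := ⟨_, rfl⟩
  rw [← hs_def] at habs hupper hRrep' hts
  have hn0 : (0:ℝ) ≤ (n:ℝ) := Nat.cast_nonneg n
  have hDrep : D δ = (n:ℝ) * (θ δ)^2 + σ^2 * Real.exp (-(2*(n:ℝ)*δ)) / (2 * Real.sinh δ) := by
    rw [hD δ hδ0]; exact hDrep'
  have hRrep : R δ = (1/2) * ((n:ℝ) * s - (n:ℝ)^2 * δ) := by
    rw [hR δ hδ0]; exact hRrep'
  obtain ⟨u, hu_def⟩ : ∃ u : ℝ, u = (n:ℝ) * δ := ⟨_, rfl⟩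
  have hu0 : 0 ≤ u := by rw [hu_def]; positivity
  obtain ⟨E, hE_def⟩ : ∃ E : ℝ, E = Real.exp (-(2*u)) := ⟨_, rfl⟩
  have hE0 : 0 < E := by rw [hE_def]; positivity
  have hE1 : E ≤ 1 := by rw [hE_def]; exact Real.exp_le_one_iff.2 (by linarith [hu0])
  have habs2 : |s - 2*u| ≤ δ := by
    rw [show s - 2*u = s - 2*(n:ℝ)*δ by rw [hu_def]; ring]
    exact habs
  have hs_le : s ≤ 2*u + δ := by have := (abs_le.1 habs2).2; linarith
  have hs_ge : 2*u - δ ≤ s := by have := (abs_le.1 habs2).1; linarith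
  have hE2u : Real.exp (-(2*(n:ℝ)*δ)) = E := by
    rw [hE_def, hu_def]; ring_nf
  have hexps_le : Real.exp (-s) ≤ E * Real.exp δ := by
    rw [hE_def, ← Real.exp_add]
    exact Real.exp_le_exp.2 (by linarith)
  have hexps_ge : E * Real.exp (-δ) ≤ Real.exp (-s) := by
    rw [hE_def, ← Real.exp_add]
    exact Real.exp_le_exp.2 (by linarith)
  -- bound (1): c ≤ (2u+1)E , hence u ≤ M
  have hδD_le : δ * D δ ≤ σ^2 * ((2*u+1) * E) := by
    rw [hDrep, hts, hE2u]
    have e1 : δ * ((n:ℝ) * (σ^2 * Real.exp (-s))) ≤ 2*u*σ^2*E := by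
      have heq : δ * ((n:ℝ) * (σ^2 * Real.exp (-s))) = u * σ^2 * Real.exp (-s) := by
        rw [hu_def]; ring
      rw [heq]
      calc u * σ^2 * Real.exp (-s) ≤ u * σ^2 * (E * Real.exp δ) := by
            have huσ : 0 ≤ u * σ^2 := by positivity
            exact mul_le_mul_of_nonneg_left hexps_le huσ
        _ ≤ u * σ^2 * (E * 2) := by
            have huσ : 0 ≤ u * σ^2 := by positivity
            exact mul_le_mul_of_nonneg_left
              (mul_le_mul_of_nonneg_left hexpδ2 hE0.le) huσ
        _ = 2*u*σ^2*E := by ring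
    have e2 : δ * (σ^2 * E / (2 * Real.sinh δ)) ≤ σ^2 * E / 2 := by
      have h1 : δ * (σ^2 * E / (2 * Real.sinh δ)) ≤ δ * (σ^2 * E / (2 * δ)) := by
        gcongr
      have h2 : δ * (σ^2 * E / (2 * δ)) = σ^2 * E / 2 := by
        field_simp
      linarith
    have e3 : σ^2*((2*u+1)*E) - (2*u*σ^2*E + σ^2*E/2) = σ^2*E/2 := by ring
    have e4 : (0:ℝ) ≤ σ^2*E/2 := by positivity
    calc δ * ((n:ℝ) * (σ^2 * Real.exp (-s)) + σ^2 * E / (2 * Real.sinh δ))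
        = δ * ((n:ℝ) * (σ^2 * Real.exp (-s))) + δ * (σ^2 * E / (2 * Real.sinh δ)) := by ring
      _ ≤ 2*u*σ^2*E + σ^2 * E / 2 := by linarith
      _ ≤ σ^2 * ((2*u+1) * E) := by linarith
  have hcfu : c ≤ (2*u+1) * E := by
    have h1 : L/2 < σ^2 * ((2*u+1)*E) := lt_of_lt_of_le hδD hδD_le
    have h2 : c ≤ L/(2*σ^2) := by rw [hc_def]; exact min_le_left _ _
    rw [le_div_iff₀ (by positivity : (0:ℝ) < 2*σ^2)] at h2
    have h3 : c * (2*σ^2) < ((2*u+1)*E) * (2*σ^2) := by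
      have hr : ((2*u+1)*E) * (2*σ^2) = 2*(σ^2*((2*u+1)*E)) := by ring
      linarith
    exact le_of_lt (lt_of_mul_lt_mul_right h3 (by positivity))
  have huM : u ≤ M := by
    rw [hM_def]
    refine le_M_of_f_ge c u hc hc1 hu0 ?_
    rw [← hE_def]
    exact hcfu
  -- y and x
  obtain ⟨y, hy_def⟩ : ∃ y : ℝ, y = D δ / ((Real.cosh δ / Real.sinh δ / 2) * σ ^ 2) := ⟨_, rfl⟩
  have hymem : y ∈ Set.Ioc (0:ℝ) 1 := by rw [hy_def]; exact hpart1 δ hδ0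
  obtain ⟨x, hx_def⟩ : ∃ x : ℝ, x = wNeg1 y := ⟨_, rfl⟩
  obtain ⟨hx0, hxf⟩ := hw_right y hymem
  rw [← hx_def] at hx0 hxf
  rw [Real.dist_eq, sub_zero, ← hy_def, ← hx_def]
  -- y ≥ c, hence x ≤ M
  obtain ⟨T, hT_def⟩ : ∃ T : ℝ, T = 2*(n:ℝ)*Real.sinh δ*Real.exp (-s) := ⟨_, rfl⟩
  have hy_eq : y = (T + E) / Real.cosh δ := by
    rw [hy_def, hDrep, hts, hE2u, hT_def]
    field_simp
  have hyc : c ≤ y := by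
    have hDq : y = D δ * (2 * Real.sinh δ) / (σ^2 * Real.cosh δ) := by
      rw [hy_def]
      field_simp
    have h1 : δ * D δ ≤ D δ * Real.sinh δ := by
      have h := mul_le_mul_of_nonneg_left hSδ (hDpos δ hδ0).le
      linarith [h]
    have h2 : L < D δ * (2 * Real.sinh δ) := by linarith
    have h3 : L/(σ^2 * Real.cosh δ) ≤ y := by
      rw [hDq]
      gcongr
    have h4 : L/(2*σ^2) ≤ L/(σ^2 * Real.cosh δ) := by
      apply div_le_div_of_nonneg_left hL0.le (by positivity)
      have := mul_le_mul_of_nonneg_left hC2 hσ2.le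
      linarith
    refine le_trans ?_ (le_trans h4 h3)
    rw [hc_def]
    exact min_le_left _ _
  have hxM : x ≤ M := by
    rw [hM_def]
    refine le_M_of_f_ge c x hc hc1 hx0 ?_
    rw [hxf]
    exact hyc
  -- bound (5): |y - (2u+1)E| small
  have hT_up : T ≤ 2*u*(E*Real.exp (2*δ)) := by
    have t1 : Real.sinh δ * Real.exp (-s) ≤ (δ*Real.cosh δ) * (E*Real.exp δ) :=
      mul_le_mul hSC hexps_le (Real.exp_pos _).le (by positivity)
    have t2 : (δ*Real.cosh δ) * (E*Real.exp δ) ≤ δ*(E*Real.exp (2*δ)) := by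
      rw [hexp2]
      have h := mul_le_mul_of_nonneg_right hCe (by positivity : (0:ℝ) ≤ E*Real.exp δ)
      calc (δ*Real.cosh δ) * (E*Real.exp δ) = δ * (Real.cosh δ * (E*Real.exp δ)) := by ring
        _ ≤ δ * (Real.exp δ * (E*Real.exp δ)) := mul_le_mul_of_nonneg_left h hδ0.le
        _ = δ*(E*(Real.exp δ*Real.exp δ)) := by ring
    have hTeq : T = 2*(n:ℝ) * (Real.sinh δ * Real.exp (-s)) := by rw [hT_def]; ring
    rw [hTeq]
    calc 2*(n:ℝ) * (Real.sinh δ * Real.exp (-s)) ≤ 2*(n:ℝ) * (δ*(E*Real.exp (2*δ))) := by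
          have h2n : (0:ℝ) ≤ 2*(n:ℝ) := by positivity
          exact mul_le_mul_of_nonneg_left (t1.trans t2) h2n
      _ = 2*u*(E*Real.exp (2*δ)) := by rw [hu_def]; ring
  have hT_lo : 2*u*(E*Real.exp (-δ)) ≤ T := by
    have t1 : δ * (E * Real.exp (-δ)) ≤ Real.sinh δ * Real.exp (-s) :=
      mul_le_mul hSδ hexps_ge (by positivity) hS.le
    have hTeq : T = 2*(n:ℝ) * (Real.sinh δ * Real.exp (-s)) := by rw [hT_def]; ring
    rw [hTeq]
    calc 2*u*(E*Real.exp (-δ)) = 2*(n:ℝ) * (δ * (E * Real.exp (-δ))) := by rw [hu_def]; ring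
      _ ≤ 2*(n:ℝ) * (Real.sinh δ * Real.exp (-s)) := by
          have h2n : (0:ℝ) ≤ 2*(n:ℝ) := by positivity
          exact mul_le_mul_of_nonneg_left t1 h2n
  have hgap := exp_gap δ hδ0.le
  have hyfu_eq : y - (2*u+1)*E = (T + E - (2*u+1)*E*Real.cosh δ)/Real.cosh δ := by
    rw [hy_eq]
    field_simp
  have habsN : |T + E - (2*u+1)*E*Real.cosh δ| ≤ (2*M+1)*(Real.exp (2*δ)-1) :=
    N_bound T E (Real.cosh δ) (Real.exp δ) (Real.exp (-δ)) (Real.exp (2*δ)) u M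
      hu0 huM hE0 hE1 hC1 hCe hexpδ1 hexpprod hexp2 hgap.1 hgap.2 hT_up hT_lo
  have hB : (0:ℝ) ≤ (2*M+1)*(Real.exp (2*δ)-1) :=
    mul_nonneg (by linarith) (by linarith)
  have hyfu : |y - (2*u+1)*E| ≤ (2*M+1)*(Real.exp (2*δ)-1) := by
    rw [hyfu_eq, abs_div, abs_of_pos hC0, div_le_iff₀ hC0]
    have hBC : (2*M+1)*(Real.exp (2*δ)-1) ≤ (2*M+1)*(Real.exp (2*δ)-1) * Real.cosh δ :=
      le_mul_of_one_le_right hB hC1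
    linarith [habsN]
  -- modulus argument
  have hgval : g δ = M^2*δ^2 + M*δ^3 + M*δ/2 + (2*M+1)*(Real.exp (2*δ) - 1) := by
    rw [hg_def]
  have hgpart1 : (2*M+1)*(Real.exp (2*δ)-1) ≤ g δ := by
    rw [hgval]
    have h1 : (0:ℝ) ≤ M^2*δ^2 := by positivity
    have h2 : (0:ℝ) ≤ M*δ^3 := by positivity
    have h3 : (0:ℝ) ≤ M*δ/2 := by positivity
    linarith
  have hgpart2 : M^2*δ^2 + M*δ^3 + M*δ/2 ≤ g δ := by
    rw [hgval]
    linarith [hB]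
  have hmod : |(2*x+1)*Real.exp (-(2*x)) - (2*u+1)*E| < η := by
    rw [hxf]
    calc |y - (2*u+1)*E| ≤ (2*M+1)*(Real.exp (2*δ)-1) := hyfu
      _ ≤ g δ := hgpart1
      _ < min (ε/3) η := hgδ
      _ ≤ η := min_le_right _ _
  have hxu : |x - u| < ε' := by
    refine inv_modulus M ε' x u hε' ⟨hx0, hxM⟩ ⟨hu0, huM⟩ ?_
    rw [hη_def] at hmod
    rw [hE_def] at hmod
    exact hmod
  -- pieces of the final bound
  have hT3 : |(1/2)*u^2 - (1/2)*x^2| ≤ M * ε' := by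
    have heq : (1/2)*u^2 - (1/2)*x^2 = (u+x)/2 * (u - x) := by ring
    rw [heq, abs_mul]
    have h1 : |(u+x)/2| ≤ M := by
      rw [abs_of_nonneg (by linarith)]
      linarith
    have h2 : |u - x| ≤ ε' := by rw [abs_sub_comm]; exact hxu.le
    exact mul_le_mul h1 h2 (abs_nonneg _) hM0.le
  have hR0 : 0 ≤ R δ := by
    rw [hRrep]
    rcases Nat.eq_zero_or_pos n with h0 | h1
    · simp [h0]
    · have hn1 : (1:ℝ) ≤ (n:ℝ) := by exact_mod_cast h1
      refine R_nonneg (n:ℝ) s δ hn1 hδ0 ?_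
      rw [← hu_def]
      linarith
  have hRub : R δ ≤ ((n:ℝ)^2*δ + (n:ℝ)*δ)/2 := by
    rw [hRrep]
    have h := mul_le_mul_of_nonneg_left hs_le hn0
    rw [hu_def] at h
    linarith [h]
  have hfrac_nonneg : 0 ≤ δ - Real.sinh δ/Real.cosh δ := by
    rw [sub_nonneg, div_le_iff₀ hC0]
    exact hSC
  have hfrac_le : δ - Real.sinh δ/Real.cosh δ ≤ 2*δ^3 :=
    frac_bound δ (Real.sinh δ) (Real.cosh δ) hδ0 hS hC1 hC2 hSδ (by linarith [hSC])
      (Real.cosh_sq_sub_sinh_sq δ)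
  have hT1 : |R δ * (Real.sinh δ/Real.cosh δ) - R δ * δ| ≤ M^2*δ^2 + M*δ^3 := by
    rw [abs_sub_comm, show R δ * δ - R δ * (Real.sinh δ/Real.cosh δ)
        = R δ * (δ - Real.sinh δ/Real.cosh δ) by ring]
    rw [abs_of_nonneg (mul_nonneg hR0 hfrac_nonneg)]
    have h1 : R δ * (δ - Real.sinh δ/Real.cosh δ) ≤ R δ * (2*δ^3) :=
      mul_le_mul_of_nonneg_left hfrac_le hR0
    have h2 : R δ * (2*δ^3) ≤ (((n:ℝ)^2*δ + (n:ℝ)*δ)/2) * (2*δ^3) :=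
      mul_le_mul_of_nonneg_right hRub (by positivity)
    have h3 : (((n:ℝ)^2*δ + (n:ℝ)*δ)/2) * (2*δ^3) = u^2*δ^2 + u*δ^3 := by
      rw [hu_def]; ring
    have h4 := poly_mono u M δ hu0 huM hδ0.le
    linarith [h1, h2, h3, h4]
  have hT2 : |R δ * δ - (1/2)*u^2| ≤ M*δ/2 := by
    have heq : R δ * δ - (1/2)*u^2 = u/2 * (s - 2*u) := by
      rw [hRrep, hu_def]; ring
    rw [heq, abs_mul, abs_of_nonneg (by linarith : (0:ℝ) ≤ u/2)]
    calc u/2 * |s - 2*u| ≤ u/2 * δ := mul_le_mul_of_nonneg_left habs2 (by linarith)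
      _ ≤ M/2 * δ := mul_le_mul_of_nonneg_right (by linarith) hδ0.le
      _ = M*δ/2 := by ring
  -- conclusion
  have hdiv : R δ / (Real.cosh δ / Real.sinh δ) = R δ * (Real.sinh δ/Real.cosh δ) := by
    rw [div_div_eq_mul_div, mul_div_assoc]
  rw [hdiv]
  have htri : |R δ * (Real.sinh δ/Real.cosh δ) - (1/2)*x^2|
      ≤ |R δ * (Real.sinh δ/Real.cosh δ) - R δ * δ| + |R δ * δ - (1/2)*u^2|
        + |(1/2)*u^2 - (1/2)*x^2| := by
    have ht1 := abs_sub_le (R δ * (Real.sinh δ/Real.cosh δ)) (R δ * δ) ((1/2)*x^2)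
    have ht2 := abs_sub_le (R δ * δ) ((1/2)*u^2) ((1/2)*x^2)
    linarith
  have hMε' : M * ε' < ε/3 := by
    have h1 : ε' ≤ ε/(3*(M+1)) := by rw [hε'_def]; exact min_le_right _ _
    have h2 : M * ε' ≤ M * (ε/(3*(M+1))) := mul_le_mul_of_nonneg_left h1 hM0.le
    linarith [Meps_lt M ε hM0 hε]
  have hpoly : M^2*δ^2 + M*δ^3 + M*δ/2 < ε/3 :=
    lt_of_le_of_lt hgpart2 (lt_of_lt_of_le hgδ (min_le_left _ _))
  calc |R δ * (Real.sinh δ/Real.cosh δ) - (1/2)*x^2|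
      ≤ (M^2*δ^2 + M*δ^3) + M*δ/2 + M*ε' := by linarith [hT1, hT2, hT3, htri]
    _ < ε/3 + ε/3 := by linarith
    _ < ε := by linarith
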